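/- If u : ℝ → ℝ³ is a solution of the reduced equation of motion ü = Σ_{R ∈ 𝓡\{I}} (I−R)u/|(R−I)u|³ − Q u/|u|³ (with u(t) avoiding the rotation axes and the origin), then for every R₀ in the rotation group 𝓡 the configuration u_R(t) := R u(t), R ∈ 𝓡, solves the full Coulomb (N+1)-body system m ü_i = Σ_{j≠i} (u_i−u_j)/|u_i−u_j|³ − Q u_i/|u_i|³ with m = 1, N = |𝓡|. -/

import Mathlib

open scoped Classical RealInnerProductSpace

noncomputable section

abbrev E3 : Type := EuclideanSpace ℝ (Fin 3)

/-- The action of a `3 × 3` real matrix on a point of Euclidean 3-space. -/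
def act (A : Matrix (Fin 3) (Fin 3) ℝ) (x : E3) : E3 :=
  (WithLp.equiv 2 (Fin 3 → ℝ)).symm (A.mulVec ((WithLp.equiv 2 (Fin 3 → ℝ)) x))

lemma act_eq_toEuclideanLin (A : Matrix (Fin 3) (Fin 3) ℝ) (x : E3) :
    act A x = Matrix.toEuclideanLin A x := rfl

lemma act_act (A B : Matrix (Fin 3) (Fin 3) ℝ) (x : E3) :
    act A (act B x) = act (A * B) x := by
  simp [act, Matrix.mulVec_mulVec]

lemma act_sub (A B : Matrix (Fin 3) (Fin 3) ℝ) (x : E3) :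
    act (A - B) x = act A x - act B x := by
  simp [act, Matrix.sub_mulVec, WithLp.toLp_sub]

lemma act_one (x : E3) : act 1 x = x := by
  simp [act]

lemma act_neg (A : Matrix (Fin 3) (Fin 3) ℝ) (x : E3) :
    act (-A) x = -act A x := by
  simp [act, Matrix.neg_mulVec]

lemma norm_act (R : Matrix (Fin 3) (Fin 3) ℝ)
    (hR : R ∈ Matrix.orthogonalGroup (Fin 3) ℝ) (x : E3) :
    ‖act R x‖ = ‖x‖ := by
  have h1 : star R * R = 1 := hR.1
  have key : ⟪act R x, act R x⟫ = ⟪x, x⟫ := by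
    rw [act_eq_toEuclideanLin]
    rw [← real_inner_comm x, ← LinearMap.adjoint_inner_left,
      ← Matrix.toEuclideanLin_conjTranspose_eq_adjoint, ← Matrix.star_eq_conjTranspose,
      ← act_eq_toEuclideanLin, ← act_eq_toEuclideanLin, act_act, h1, act_one]
  have h2 : ‖act R x‖ ^ 2 = ‖x‖ ^ 2 := by
    rw [← real_inner_self_eq_norm_sq, ← real_inner_self_eq_norm_sq, key]
  nlinarith [norm_nonneg (act R x), norm_nonneg x, h2]

/-- `act R₀` as a continuous linear map. -/
def actCLM (A : Matrix (Fin 3) (Fin 3) ℝ) : E3 →L[ℝ] E3 :=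
  LinearMap.toContinuousLinearMap (Matrix.toEuclideanLin A)

lemma actCLM_apply (A : Matrix (Fin 3) (Fin 3) ℝ) (x : E3) : actCLM A x = act A x := rfl

lemma deriv_act (A : Matrix (Fin 3) (Fin 3) ℝ) (f : ℝ → E3) (hf : Differentiable ℝ f) :
    deriv (fun s => act A (f s)) = fun s => act A (deriv f s) := by
  funext t
  have h : HasDerivAt (fun s => actCLM A (f s)) (actCLM A (deriv f t)) t :=
    ((actCLM A).hasFDerivAt).comp_hasDerivAt t (hf t).hasDerivAt
  simpa [actCLM_apply] using h.deriv

/-- a collision-free solution of the reduced equation of motion gives, by the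
symmetry `u_R = R u_I`, a solution of the full Coulomb `(N+1)`-body problem. -/
theorem reduced_solution_gives_full_solution
    (𝓡 : Finset (Matrix (Fin 3) (Fin 3) ℝ))
    (hone : (1 : Matrix (Fin 3) (Fin 3) ℝ) ∈ 𝓡)
    (hmul : ∀ R ∈ 𝓡, ∀ R' ∈ 𝓡, R * R' ∈ 𝓡)
    (hinv : ∀ R ∈ 𝓡, R⁻¹ ∈ 𝓡)
    (hso : ∀ R ∈ 𝓡, R ∈ Matrix.orthogonalGroup (Fin 3) ℝ ∧ R.det = 1)
    (Q : ℝ) (hQ : 0 < Q)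
    (u : ℝ → E3) (hu : ContDiff ℝ 2 u)
    (hne0 : ∀ t, u t ≠ 0)
    (hax : ∀ t, ∀ R ∈ 𝓡, R ≠ 1 → act (R - 1) (u t) ≠ 0)
    (hode : ∀ t, deriv (deriv u) t =
      (∑ R ∈ 𝓡.erase 1, (‖act (R - 1) (u t)‖ ^ 3)⁻¹ • act (1 - R) (u t))
        - (‖u t‖ ^ 3)⁻¹ • (Q • u t)) :
    ∀ R₀ ∈ 𝓡, ∀ t : ℝ,
      deriv (deriv (fun s => act R₀ (u s))) t =
        (∑ R' ∈ 𝓡.erase R₀, (‖act R₀ (u t) - act R' (u t)‖ ^ 3)⁻¹ •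
            (act R₀ (u t) - act R' (u t)))
          - (‖act R₀ (u t)‖ ^ 3)⁻¹ • (Q • act R₀ (u t)) := by
  intro R₀ hR₀ t
  have hR₀o := (hso R₀ hR₀).1
  have hdet : IsUnit R₀.det := by rw [(hso R₀ hR₀).2]; exact isUnit_one
  have hinvmul : R₀⁻¹ * R₀ = 1 := Matrix.nonsing_inv_mul R₀ hdet
  have hmulinv : R₀ * R₀⁻¹ = 1 := Matrix.mul_nonsing_inv R₀ hdet
  -- differentiability
  have hu1 : Differentiable ℝ u := hu.differentiable (by norm_num)
  have hu2 : Differentiable ℝ (deriv u) := by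
    have h2 : ContDiff ℝ (1 + 1) u := by exact_mod_cast hu
    exact ((contDiff_succ_iff_deriv.mp h2).2.2).differentiable one_ne_zero
  -- compute the second derivative of the rotated solution
  have hd2 : deriv (deriv (fun s => act R₀ (u s))) t = act R₀ (deriv (deriv u) t) := by
    rw [deriv_act R₀ u hu1]
    have := deriv_act R₀ (deriv u) hu2
    rw [this]
  rw [hd2, hode t]
  -- push `act R₀` through the linear structure
  have hmap : ∀ y z : E3, act R₀ (y - z) = act R₀ y - act R₀ z := fun y z =>
    map_sub (actCLM R₀) y z
  have hsmul : ∀ (c : ℝ) (y : E3), act R₀ (c • y) = c • act R₀ y := fun c y =>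
    map_smul (actCLM R₀) c y
  rw [hmap, show act R₀ (∑ R ∈ 𝓡.erase 1, (‖act (R - 1) (u t)‖ ^ 3)⁻¹ • act (1 - R) (u t))
      = ∑ R ∈ 𝓡.erase 1, act R₀ ((‖act (R - 1) (u t)‖ ^ 3)⁻¹ • act (1 - R) (u t)) from
    map_sum (actCLM R₀) _ (𝓡.erase 1)]
  congr 1
  · -- the interaction sum
    refine Finset.sum_nbij' (fun R => R₀ * R) (fun R' => R₀⁻¹ * R') ?_ ?_ ?_ ?_ ?_
    · intro R hR
      rcases Finset.mem_erase.mp hR with ⟨hR1, hRm⟩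
      refine Finset.mem_erase.mpr ⟨?_, hmul R₀ hR₀ R hRm⟩
      intro h
      apply hR1
      have := congrArg (fun M => R₀⁻¹ * M) h
      simpa [← mul_assoc, hinvmul] using this
    · intro R' hR'
      rcases Finset.mem_erase.mp hR' with ⟨hR1, hRm⟩
      refine Finset.mem_erase.mpr ⟨?_, hmul R₀⁻¹ (hinv R₀ hR₀) R' hRm⟩
      intro h
      apply hR1
      have := congrArg (fun M => R₀ * M) h
      simpa [← mul_assoc, hmulinv] using this
    · intro R _; simp [← mul_assoc, hinvmul]
    · intro R' _; simp [← mul_assoc, hmulinv]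
    · intro R hR
      beta_reduce
      have hnorm : ‖act R₀ (u t) - act (R₀ * R) (u t)‖ = ‖act (R - 1) (u t)‖ := by
        rw [← act_sub, show R₀ - R₀ * R = R₀ * (1 - R) from by rw [mul_sub, mul_one], ← act_act,
          norm_act R₀ hR₀o, show (1 : Matrix (Fin 3) (Fin 3) ℝ) - R = -(R - 1) from
            (neg_sub R 1).symm, act_neg, norm_neg]
      have hsub : act R₀ (act (1 - R) (u t)) = act R₀ (u t) - act (R₀ * R) (u t) := by
        rw [act_act, mul_sub, mul_one, act_sub]
      rw [hsmul, hsub, hnorm]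
  · -- the central term
    rw [hsmul, hsmul, norm_act R₀ hR₀o]
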